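/- (Theorem 4, posterior mode of δ at 0 under the joint power prior) Suppose π₀(δ) is non-increasing on [0,1], the conditional posterior of θ given δ is proper, and M := max_{0≤δ≤1} [∫π₀(θ)f(D|θ)f(D₀|θ)^δ log f(D₀|θ)dθ / ∫π₀(θ)f(D|θ)f(D₀|θ)^δ dθ] < ∞. Then with k₀ = exp(−M/n₀) > 0 and likelihood L(θ|x) = k₀ f(x|θ), the joint-power-prior marginal posterior π(δ|D₀,D) ∝ π₀(δ)∫f(D|θ)[k₀^{n₀}f(D₀|θ)]^δπ₀(θ)dθ is non-increasing in δ, so it has a mode at δ = 0. -/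

import Mathlib

open MeasureTheory Real Set

/-- Theorem 4: under the joint power prior with likelihood rescaled by the
constant k₀ = exp(−M/n₀), the marginal posterior of δ is non-increasing on [0,1], hence
has a mode at δ = 0. -/
theorem jpp_posterior_mode_delta_zero {Θ : Type*} [MeasurableSpace Θ] (μ : Measure Θ)
    (n n₀ : ℕ) (hn : 0 < n) (hn₀ : 0 < n₀)
    (fD fD₀ π₀ : Θ → ℝ) (hfD₀ : ∀ θ, 0 < fD₀ θ)
    (hπ₀ : ∀ θ, 0 ≤ π₀ θ) (hπ₀1 : ∫ θ, π₀ θ ∂μ = 1)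
    (pδ : ℝ → ℝ) (hpδ0 : ∀ δ ∈ Icc (0:ℝ) 1, 0 ≤ pδ δ)
    (hpδanti : AntitoneOn pδ (Icc 0 1))
    (F G : ℝ → ℝ)
    (hF : ∀ δ, F δ = ∫ θ, π₀ θ * fD θ * fD₀ θ ^ δ ∂μ)
    (hG : ∀ δ, G δ = ∫ θ, π₀ θ * fD θ * fD₀ θ ^ δ * Real.log (fD₀ θ) ∂μ)
    (hFpos : ∀ δ ∈ Icc (0:ℝ) 1, 0 < F δ)
    (hDUI : ∀ δ ∈ Icc (0:ℝ) 1, HasDerivAt F (G δ) δ)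
    (M : ℝ) (hM : ∀ δ ∈ Icc (0:ℝ) 1, G δ / F δ ≤ M)
    (k₀ : ℝ) (hk₀ : k₀ = Real.exp (-M / n₀))
    (m : ℝ → ℝ)
    (hm : ∀ δ, m δ = pδ δ * ∫ θ, fD θ * (k₀ ^ (n₀ : ℝ) * fD₀ θ) ^ δ * π₀ θ ∂μ)
    (hmF : ∀ δ, (∫ θ, fD θ * (k₀ ^ (n₀ : ℝ) * fD₀ θ) ^ δ * π₀ θ ∂μ) =
      k₀ ^ ((n₀ : ℝ) * δ) * F δ) :
    0 < k₀ ∧ AntitoneOn m (Icc 0 1) ∧ ∀ δ ∈ Icc (0:ℝ) 1, m δ ≤ m 0 := by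

  have hk₀pos : 0 < k₀ := hk₀ ▸ Real.exp_pos _
  have hn₀' : (n₀ : ℝ) ≠ 0 := Nat.cast_ne_zero.mpr hn₀.ne'
  set H : ℝ → ℝ := fun δ => Real.exp (-M * δ) * F δ with hHdef
  have hkpow : ∀ δ : ℝ, k₀ ^ ((n₀ : ℝ) * δ) = Real.exp (-M * δ) := by
    intro δ
    rw [hk₀, ← Real.exp_mul]
    congr 1
    field_simp
  have hm' : ∀ δ, m δ = pδ δ * H δ := by
    intro δ
    rw [hm, hmF, hkpow]
  have hHderiv : ∀ δ ∈ Icc (0:ℝ) 1,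
      HasDerivAt H (Real.exp (-M * δ) * (G δ - M * F δ)) δ := by
    intro δ hδ
    have h1 : HasDerivAt (fun x : ℝ => Real.exp (-M * x)) (Real.exp (-M * δ) * (-M)) δ := by
      simpa using ((hasDerivAt_id δ).const_mul (-M)).exp
    have := h1.mul (hDUI δ hδ)
    exact this.congr_deriv (by ring)
  have hHanti : AntitoneOn H (Icc 0 1) := by
    apply antitoneOn_of_deriv_nonpos (convex_Icc 0 1)
    · exact fun x hx => ((hHderiv x hx).continuousAt).continuousWithinAt
    · intro x hx
      rw [interior_Icc] at hx
      exact ((hHderiv x (Ioo_subset_Icc_self hx)).differentiableAt).differentiableWithinAt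
    · intro x hx
      rw [interior_Icc] at hx
      have hx' := Ioo_subset_Icc_self hx
      rw [(hHderiv x hx').deriv]
      have hF' := hFpos x hx'
      have : G x ≤ M * F x := by
        have := hM x hx'
        rw [div_le_iff₀ hF'] at this
        linarith
      have hexp : (0:ℝ) ≤ Real.exp (-M * x) := (Real.exp_pos _).le
      nlinarith
  have hHnonneg : ∀ δ ∈ Icc (0:ℝ) 1, 0 ≤ H δ := fun δ hδ =>
    le_of_lt (mul_pos (Real.exp_pos _) (hFpos δ hδ))
  have hanti : AntitoneOn m (Icc 0 1) := by
    intro a ha b hb hab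
    rw [hm' a, hm' b]
    calc pδ b * H b ≤ pδ a * H b :=
          mul_le_mul_of_nonneg_right (hpδanti ha hb hab) (hHnonneg b hb)
      _ ≤ pδ a * H a :=
          mul_le_mul_of_nonneg_left (hHanti ha hb hab) (hpδ0 a ha)
  exact ⟨hk₀pos, hanti, fun δ hδ => hanti (left_mem_Icc.mpr zero_le_one) hδ hδ.1⟩
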